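/- Let C > 0 be a constant and consider the random bipartite graph G(m, m, q) with q = (log m)/m. Then for all sufficiently large m, with probability at least 1 − 1/m^C the graph contains a matching of size at least m − m/(log m). -/

import Mathlib

open Filter

noncomputable section
open scoped Classical

section AuxProb
open Finset

def cfgW {γ : Type*} [Fintype γ] (p : ℝ) (g : γ → Bool) : ℝ :=
  ∏ q : γ, if g q then p else 1 - p

lemma cfgW_nonneg {γ : Type*} [Fintype γ] {p : ℝ} (h0 : 0 ≤ p) (h1 : p ≤ 1)
    (g : γ → Bool) : 0 ≤ cfgW p g := by
  refine Finset.prod_nonneg fun q _ => ?_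
  split <;> linarith

lemma sum_cfgW {γ : Type*} [DecidableEq γ] [Fintype γ] (p : ℝ) : ∑ g : γ → Bool, cfgW p g = 1 := by
  have h := Finset.prod_univ_sum (fun _ : γ => (univ : Finset Bool)) (fun _ b => if b then p else 1 - p)
  rw [Fintype.piFinset_univ] at h
  rw [show (∑ g : γ → Bool, cfgW p g) = ∑ g ∈ (univ : Finset (γ → Bool)), ∏ q : γ, if g q then p else 1 - p from rfl, ← h]
  simp

lemma sum_cfgW_rect {γ : Type*} [DecidableEq γ] [Fintype γ] (p : ℝ) (R : Finset γ) :
    ∑ g : γ → Bool, (if ∀ q ∈ R, g q = false then cfgW p g else 0) = (1 - p) ^ R.card := by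
  have h := Finset.prod_univ_sum (fun q : γ => if q ∈ R then ({false} : Finset Bool) else univ)
    (fun _ b => if b then p else 1 - p)
  have hL : (∏ q : γ, ∑ b ∈ (if q ∈ R then ({false} : Finset Bool) else univ),
      (if b then p else 1 - p)) = (1 - p) ^ R.card := by
    have h1 : ∀ q : γ, (∑ b ∈ (if q ∈ R then ({false} : Finset Bool) else univ),
        (if b then p else 1 - p)) = if q ∈ R then 1 - p else 1 := by
      intro q; split <;> simp
    rw [Finset.prod_congr rfl (fun q _ => h1 q), Finset.prod_ite, Finset.prod_const,
      Finset.prod_const, one_pow, mul_one]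
    congr 1
    simp [Finset.filter_mem_eq_inter]
  rw [hL] at h
  rw [h]
  have hset : Fintype.piFinset (fun q : γ => if q ∈ R then ({false} : Finset Bool) else univ)
      = univ.filter (fun g : γ → Bool => ∀ q ∈ R, g q = false) := by
    ext g
    simp only [Fintype.mem_piFinset, Finset.mem_filter, Finset.mem_univ, true_and]
    constructor
    · intro hg q hq; have := hg q; simp [hq] at this; exact this
    · intro hg q; by_cases hq : q ∈ R <;> simp [hq, hg]
  rw [hset, Finset.sum_filter]
  rfl

/-- The probability that the random bipartite graph with parts `Fin a` and `Fin b`, in which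
each pair is an edge independently with probability `p`, satisfies the property `P`. -/
def bipProb (a b : ℕ) (p : ℝ) (P : (Fin a → Fin b → Prop) → Prop) : ℝ :=
  ∑ f : Fin a → Fin b → Bool,
    if P (fun x y => f x y = true) then
      p ^ (Finset.univ.filter (fun q : Fin a × Fin b => f q.1 q.2 = true)).card *
        (1 - p) ^ (Finset.univ.filter (fun q : Fin a × Fin b => f q.1 q.2 = false)).card
    else 0

lemma bipProb_as_w (a b : ℕ) (p : ℝ) (P : (Fin a → Fin b → Prop) → Prop) :
    bipProb a b p P =
      ∑ g : Fin a × Fin b → Bool, if P (fun x y => g (x, y) = true) then cfgW p g else 0 := by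
  rw [bipProb]
  refine Fintype.sum_equiv (Equiv.curry (Fin a) (Fin b) Bool).symm _ _ fun f => ?_
  have hw : cfgW p ((Equiv.curry (Fin a) (Fin b) Bool).symm f)
      = p ^ (Finset.univ.filter (fun q : Fin a × Fin b => f q.1 q.2 = true)).card *
        (1 - p) ^ (Finset.univ.filter (fun q : Fin a × Fin b => f q.1 q.2 = false)).card := by
    rw [cfgW, Finset.prod_ite, Finset.prod_const, Finset.prod_const]
    congr 2 <;> (congr 1; ext ⟨x, y⟩; simp [Equiv.curry, Function.uncurry])
  rw [hw]
  rfl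

lemma bipProb_le_sum {a b : ℕ} {p : ℝ} (h0 : 0 ≤ p) (h1 : p ≤ 1)
    {ι : Type*} (P : (Fin a → Fin b → Prop) → Prop) (I : Finset ι)
    (Q : ι → (Fin a → Fin b → Prop) → Prop)
    (h : ∀ E, P E → ∃ i ∈ I, Q i E) :
    bipProb a b p P ≤ ∑ i ∈ I, bipProb a b p (Q i) := by
  simp only [bipProb_as_w]
  rw [Finset.sum_comm]
  refine Finset.sum_le_sum fun g _ => ?_
  split
  · next hP =>
    obtain ⟨i, hi, hQ⟩ := h _ hP
    have := Finset.single_le_sum (f := fun i =>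
        if Q i (fun x y => g (x, y) = true) then cfgW p g else 0)
      (fun j _ => by split; exacts [cfgW_nonneg h0 h1 g, le_refl 0]) hi
    simpa [hQ] using this
  · refine Finset.sum_nonneg fun j _ => ?_
    split; exacts [cfgW_nonneg h0 h1 g, le_refl 0]

lemma bipProb_compl {a b : ℕ} (p : ℝ) (P : (Fin a → Fin b → Prop) → Prop) :
    bipProb a b p P + bipProb a b p (fun E => ¬ P E) = 1 := by
  simp only [bipProb_as_w]
  rw [← Finset.sum_add_distrib]
  refine Eq.trans (Finset.sum_congr rfl fun g _ => ?_) (sum_cfgW p)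
  by_cases hP : P (fun x y => g (x, y) = true) <;> simp [hP]

lemma bipProb_rect {a b : ℕ} (p : ℝ) (A : Finset (Fin a)) (B : Finset (Fin b)) :
    bipProb a b p (fun E => ∀ x ∈ A, ∀ y ∈ B, ¬ E x y) = (1 - p) ^ (A.card * B.card) := by
  rw [bipProb_as_w, ← Finset.card_product A B, ← sum_cfgW_rect p (A ×ˢ B)]
  refine Finset.sum_congr rfl fun g _ => ?_
  congr 1
  refine propext ⟨fun h q hq => ?_, fun h x hx y hy => ?_⟩
  · obtain ⟨hx, hy⟩ := Finset.mem_product.1 hq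
    have := h q.1 hx q.2 hy
    simpa using this
  · have := h (x, y) (Finset.mem_product.2 ⟨hx, hy⟩)
    simp [this]


lemma matching_of_hall {m k : ℕ} (E : Fin m → Fin m → Prop)
    (h : ∀ A : Finset (Fin m),
      A.card ≤ (A.biUnion fun x => univ.filter (fun y => E x y)).card + k) :
    ∃ (s : Finset (Fin m)) (f : Fin m → Fin m),
      Set.InjOn f ↑s ∧ (∀ x ∈ s, E x (f x)) ∧ m - k ≤ s.card := by
  set N : Fin m → Finset (Fin m) := fun x => univ.filter (fun y => E x y) with hN
  set t : Fin m → Finset (Fin m ⊕ Fin k) :=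
    fun x => (N x).image Sum.inl ∪ (univ : Finset (Fin k)).image Sum.inr with ht
  have hHall : ∀ A : Finset (Fin m), A.card ≤ (A.biUnion t).card := by
    intro A
    rcases A.eq_empty_or_nonempty with rfl | hA
    · simp
    have hbu : A.biUnion t = ((A.biUnion N).image Sum.inl) ∪ (univ.image Sum.inr) := by
      ext z
      obtain ⟨x0, hx0⟩ := hA
      cases z with
      | inl y => simp [ht, Finset.mem_biUnion]
      | inr y =>
        simp only [ht, Finset.mem_biUnion, Finset.mem_union, Finset.mem_image]
        constructor
        · intro _; right; exact ⟨y, Finset.mem_univ y, rfl⟩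
        · intro _; exact ⟨x0, hx0, Or.inr ⟨y, Finset.mem_univ y, rfl⟩⟩
    have hdisj : Disjoint ((A.biUnion N).image Sum.inl)
        ((univ : Finset (Fin k)).image Sum.inr) := by
      rw [Finset.disjoint_left]
      rintro z hz1 hz2
      obtain ⟨y1, _, rfl⟩ := Finset.mem_image.1 hz1
      obtain ⟨y2, _, h2⟩ := Finset.mem_image.1 hz2
      simp at h2
    rw [hbu, Finset.card_union_of_disjoint hdisj,
      Finset.card_image_of_injective _ Sum.inl_injective,
      Finset.card_image_of_injective _ Sum.inr_injective]
    simpa using h A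
  obtain ⟨f, hfinj, hft⟩ := (Finset.all_card_le_biUnion_card_iff_exists_injective t).1 hHall
  set s : Finset (Fin m) := univ.filter (fun x => (f x).isLeft) with hs
  refine ⟨s, fun x => Sum.elim id (fun _ => x) (f x), ?_, ?_, ?_⟩
  · intro x1 hx1 x2 hx2 hg
    simp only [hs, Finset.coe_filter, Set.mem_setOf_eq] at hx1 hx2
    obtain ⟨y1, hy1⟩ := Sum.isLeft_iff.1 hx1.2
    obtain ⟨y2, hy2⟩ := Sum.isLeft_iff.1 hx2.2
    dsimp only at hg
    rw [hy1, hy2] at hg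
    simp only [Sum.elim_inl, id] at hg
    exact hfinj (by rw [hy1, hy2, hg])
  · intro x hx
    simp only [hs, Finset.mem_filter] at hx
    obtain ⟨y, hy⟩ := Sum.isLeft_iff.1 hx.2
    dsimp only
    rw [hy]
    have := hft x
    rw [hy, ht] at this
    simp only [Finset.mem_union, Finset.mem_image] at this
    rcases this with h1 | h2
    · obtain ⟨y', hy', he⟩ := h1
      obtain rfl : y' = y := Sum.inl_injective he
      simp only [hN, Finset.mem_filter] at hy'
      simpa using hy'.2
    · obtain ⟨y', _, he⟩ := h2
      exact absurd he (by simp)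
  · have hcompl : (univ.filter (fun x => ¬ (f x).isLeft)).card ≤ k := by
      have : ∀ x ∈ univ.filter (fun x => ¬ (f x).isLeft),
          f x ∈ ((univ : Finset (Fin k)).image Sum.inr) := by
        intro x hx
        simp only [Finset.mem_filter] at hx
        cases hfx : f x with
        | inl y => rw [hfx] at hx; simp at hx
        | inr y => simp
      have hcard := Finset.card_le_card_of_injOn f this
        (fun x1 _ x2 _ he => hfinj he)
      rwa [Finset.card_image_of_injective _ Sum.inr_injective, Finset.card_univ,
        Fintype.card_fin] at hcard
    have hsum := Finset.card_filter_add_card_filter_not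
      (s := (univ : Finset (Fin m))) (p := fun x => (f x).isLeft)
    rw [Finset.card_univ, Fintype.card_fin] at hsum
    rw [hs]
    omega


lemma bad_of_no_matching {m k : ℕ} (E : Fin m → Fin m → Prop)
    (hall_conc : (∀ A : Finset (Fin m),
        A.card ≤ (A.biUnion fun x => univ.filter (fun y => E x y)).card + k) →
      ∃ (s : Finset (Fin m)) (f : Fin m → Fin m),
        Set.InjOn f ↑s ∧ (∀ x ∈ s, E x (f x)) ∧ m - k ≤ s.card)
    (h : ¬ ∃ (s : Finset (Fin m)) (f : Fin m → Fin m),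
      Set.InjOn f ↑s ∧ (∀ x ∈ s, E x (f x)) ∧ m - k ≤ s.card) :
    ∃ s : ℕ, k + 1 ≤ s ∧ 2 * s ≤ m + k + 1 ∧
      ∃ A B : Finset (Fin m),
        ((A.card = s ∧ B.card = m - s + k + 1) ∨ (A.card = m - s + k + 1 ∧ B.card = s)) ∧
        ∀ x ∈ A, ∀ y ∈ B, ¬ E x y := by
  by_contra hbad
  push_neg at hbad
  apply h
  apply hall_conc
  intro A
  by_contra hA
  push_neg at hA
  set N : Finset (Fin m) := A.biUnion fun x => univ.filter (fun y => E x y) with hNdef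
  have hAm : A.card ≤ m := by
    simpa using Finset.card_le_univ A
  have hak : k + 1 ≤ A.card := by omega
  have hNle : N.card ≤ A.card - (k + 1) := by omega
  obtain ⟨T, hNT, hTu, hTcard⟩ := Finset.exists_subsuperset_card_eq (Finset.subset_univ N)
    hNle (by simpa using (by omega : A.card - (k+1) ≤ m))
  set B := Tᶜ with hB
  have hBcard : B.card = m - (A.card - (k + 1)) := by
    rw [hB, Finset.card_compl, hTcard, Fintype.card_fin]
  have hnoedge : ∀ x ∈ A, ∀ y ∈ B, ¬ E x y := by
    intro x hx y hy hE
    have hyN : y ∈ N := Finset.mem_biUnion.2 ⟨x, hx, by simp [hE]⟩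
    have hyT : y ∈ T := hNT hyN
    rw [hB] at hy
    exact (Finset.mem_compl.1 hy) hyT
  set a := A.card
  by_cases hsplit : 2 * a ≤ m + k + 1
  · obtain ⟨x, hx, y, hy, hE⟩ := hbad a (by omega) hsplit A B (Or.inl ⟨rfl, by omega⟩)
    exact hnoedge x hx y hy hE
  · obtain ⟨x, hx, y, hy, hE⟩ := hbad (m + k + 1 - a) (by omega) (by omega) A B
      (Or.inr ⟨by omega, by omega⟩)
    exact hnoedge x hx y hy hE

lemma card_pairs (m c1 c2 : ℕ) :
    (univ.filter (fun AB : Finset (Fin m) × Finset (Fin m) =>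
      AB.1.card = c1 ∧ AB.2.card = c2)).card = m.choose c1 * m.choose c2 := by
  have : (univ.filter (fun AB : Finset (Fin m) × Finset (Fin m) =>
      AB.1.card = c1 ∧ AB.2.card = c2)) =
      (Finset.powersetCard c1 univ) ×ˢ (Finset.powersetCard c2 univ) := by
    ext ⟨A, B⟩
    simp [Finset.mem_powersetCard, Finset.subset_univ]
  rw [this, Finset.card_product, Finset.card_powersetCard, Finset.card_powersetCard,
    Finset.card_univ, Fintype.card_fin]


lemma choose_le_two_pow_mul (m t : ℕ) :
    ∀ s, t ≤ s → 3 * s ≤ 2 * m → Nat.choose m t ≤ 2 ^ (s - t) * Nat.choose m s := by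
  refine Nat.le_induction (by simp) ?_
  intro s hts ih h3
  have h3s : 3 * s ≤ 2 * m := by omega
  have hsm : s < m := by omega
  have step : Nat.choose m s ≤ 2 * Nat.choose m (s + 1) := by
    have hid : Nat.choose m (s + 1) * (s + 1) = Nat.choose m s * (m - s) :=
      Nat.choose_succ_right_eq m s
    have hle : Nat.choose m s * (m - s) ≤ (2 * Nat.choose m (s + 1)) * (m - s) := by
      rw [← hid]
      have h2 : s + 1 ≤ 2 * (m - s) := by omega
      calc Nat.choose m (s + 1) * (s + 1) ≤ Nat.choose m (s + 1) * (2 * (m - s)) :=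
            Nat.mul_le_mul_left _ h2
        _ = (2 * Nat.choose m (s + 1)) * (m - s) := by ring
    exact Nat.le_of_mul_le_mul_right hle (by omega)
  calc Nat.choose m t ≤ 2 ^ (s - t) * Nat.choose m s := ih h3s
    _ ≤ 2 ^ (s - t) * (2 * Nat.choose m (s + 1)) := Nat.mul_le_mul_left _ step
    _ = 2 ^ (s + 1 - t) * Nat.choose m (s + 1) := by
        rw [show s + 1 - t = (s - t) + 1 by omega, pow_succ]; ring

lemma choose_le_real (m s : ℕ) (hs : 0 < s) :
    (Nat.choose m s : ℝ) ≤ (Real.exp 1 * m / s) ^ s := by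
  have hfpos : (0:ℝ) < (Nat.factorial s : ℝ) := by exact_mod_cast Nat.factorial_pos s
  have hspos : (0:ℝ) < (s:ℝ) := by exact_mod_cast hs
  have h1 : (Nat.choose m s : ℝ) * (Nat.factorial s : ℝ) ≤ (m : ℝ) ^ s := by
    have h := Nat.descFactorial_le_pow m s
    rw [Nat.descFactorial_eq_factorial_mul_choose] at h
    calc (Nat.choose m s : ℝ) * (Nat.factorial s : ℝ)
        = ((Nat.factorial s * Nat.choose m s : ℕ) : ℝ) := by push_cast; ring
      _ ≤ ((m ^ s : ℕ) : ℝ) := Nat.cast_le.2 h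
      _ = (m : ℝ) ^ s := by push_cast; ring
  have hexp : Real.exp (s : ℝ) = Real.exp 1 ^ s := by
    rw [← Real.exp_nat_mul]; norm_num
  have h2 : ((s : ℝ)) ^ s ≤ (Nat.factorial s : ℝ) * Real.exp 1 ^ s := by
    have h := Real.sum_le_exp_of_nonneg (x := (s : ℝ)) (by positivity) (s + 1)
    have hterm : (s : ℝ) ^ s / (Nat.factorial s : ℝ) ≤ Real.exp s := by
      refine le_trans ?_ h
      refine Finset.single_le_sum (f := fun i => (s : ℝ) ^ i / (Nat.factorial i : ℝ))
        (fun i _ => by positivity) (Finset.self_mem_range_succ s)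
    rw [div_le_iff₀ hfpos] at hterm
    calc (s : ℝ) ^ s ≤ Real.exp s * Nat.factorial s := hterm
      _ = Nat.factorial s * Real.exp 1 ^ s := by rw [hexp]; ring
  rw [div_pow, mul_pow, le_div_iff₀ (by positivity : (0:ℝ) < (s:ℝ) ^ s)]
  calc (Nat.choose m s : ℝ) * (s : ℝ) ^ s
      ≤ (Nat.choose m s : ℝ) * ((Nat.factorial s : ℝ) * Real.exp 1 ^ s) :=
        mul_le_mul_of_nonneg_left h2 (by positivity)
    _ = ((Nat.choose m s : ℝ) * (Nat.factorial s : ℝ)) * Real.exp 1 ^ s := by ring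
    _ ≤ (m : ℝ) ^ s * Real.exp 1 ^ s := mul_le_mul_of_nonneg_right h1 (by positivity)
    _ = Real.exp 1 ^ s * (m : ℝ) ^ s := by ring


lemma term_bound (m k s : ℕ) (L : ℝ)
    (hLc : Real.log 2 + 2 + 2 * Real.log L ≤ L / 4)
    (hL100 : 100 ≤ L) (hLm : L ≤ m)
    (hmL : (m : ℝ) < (k + 1) * L)
    (hm3 : 3 ≤ m) (hk10 : 10 * k ≤ m)
    (hs1 : k + 1 ≤ s) (hs2 : 2 * s ≤ m + k + 1) :
    (Nat.choose m s : ℝ) * (Nat.choose m (m - s + k + 1) : ℝ) *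
      (1 - L / m) ^ (s * (m - s + k + 1)) ≤ Real.exp (-(m : ℝ) / 4) := by
  have hs0 : 0 < s := by omega
  have hsm : s ≤ m := by omega
  have hL0 : (0:ℝ) < L := by linarith
  have hm0 : (0:ℝ) < m := by exact_mod_cast (by omega : 0 < m)
  set n2 := m - s + k + 1 with hn2
  have hn2m : m ≤ 2 * n2 := by omega
  -- bound on choose m n2
  have hA : Nat.choose m n2 = Nat.choose m (s - (k + 1)) := by
    have he : m - (s - (k + 1)) = n2 := by omega
    rw [← he]
    exact Nat.choose_symm (by omega)
  have h3s : 3 * s ≤ 2 * m := by omega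
  have hB : Nat.choose m n2 ≤ 2 ^ s * Nat.choose m s := by
    rw [hA]
    calc Nat.choose m (s - (k + 1)) ≤ 2 ^ (s - (s - (k + 1))) * Nat.choose m s :=
          choose_le_two_pow_mul m (s - (k + 1)) s (by omega) h3s
      _ ≤ 2 ^ s * Nat.choose m s :=
          Nat.mul_le_mul_right _ (Nat.pow_le_pow_right (by norm_num) (by omega))
  -- bound on choose m s
  have hC : (Nat.choose m s : ℝ) ≤ (Real.exp 1 * L) ^ s := by
    refine le_trans (choose_le_real m s hs0) ?_
    refine pow_le_pow_left₀ (by positivity) ?_ s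
    rw [div_le_iff₀ (by exact_mod_cast hs0 : (0:ℝ) < (s:ℝ))]
    have hms : (m : ℝ) ≤ (s : ℝ) * L := by
      calc (m : ℝ) ≤ (k + 1 : ℝ) * L := le_of_lt hmL
        _ ≤ (s : ℝ) * L := by
            have : ((k : ℝ) + 1) ≤ (s : ℝ) := by exact_mod_cast hs1
            nlinarith
    nlinarith [Real.exp_pos 1, hms]
  -- bound on the (1 - q) power
  have hq01 : 0 ≤ 1 - L / m := by
    rw [sub_nonneg, div_le_one hm0]; exact hLm
  have hD : (1 - L / m) ^ (s * n2) ≤ Real.exp (-(s : ℝ) * L / 2) := by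
    have h1 : (1 - L / m) ^ (s * n2) ≤ Real.exp (-(L / m)) ^ (s * n2) := by
      refine pow_le_pow_left₀ hq01 ?_ _
      linarith [Real.add_one_le_exp (-(L / m))]
    refine le_trans h1 ?_
    rw [← Real.exp_nat_mul]
    refine Real.exp_le_exp.2 ?_
    have hcast : ((s * n2 : ℕ) : ℝ) = (s : ℝ) * (n2 : ℝ) := by push_cast; ring
    rw [hcast]
    have h2n2 : (m : ℝ) ≤ 2 * (n2 : ℝ) := by exact_mod_cast hn2m
    have key : (s : ℝ) * L / 2 ≤ (s : ℝ) * (n2 : ℝ) * (L / m) := by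
      have hhalf : (1:ℝ)/2 ≤ (n2:ℝ)/m := by
        rw [div_le_div_iff₀ (by norm_num) hm0]
        linarith
      calc (s:ℝ)*L/2 = (s:ℝ)*L*(1/2) := by ring
        _ ≤ (s:ℝ)*L*((n2:ℝ)/m) := mul_le_mul_of_nonneg_left hhalf (by positivity)
        _ = (s:ℝ)*(n2:ℝ)*(L/m) := by ring
    have hre : (s:ℝ) * (n2:ℝ) * -(L/(m:ℝ)) = -((s:ℝ)*(n2:ℝ)*(L/m)) := by ring
    rw [hre]
    linarith [key]
  -- combine
  have hcombo : (Nat.choose m s : ℝ) * (Nat.choose m n2 : ℝ) * (1 - L / m) ^ (s * n2)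
      ≤ (Real.exp 1 * L) ^ s * ((2:ℝ) ^ s * (Real.exp 1 * L) ^ s) * Real.exp (-(s:ℝ) * L / 2) := by
    have hBr : (Nat.choose m n2 : ℝ) ≤ (2:ℝ) ^ s * (Nat.choose m s : ℝ) := by
      calc (Nat.choose m n2 : ℝ) ≤ ((2 ^ s * Nat.choose m s : ℕ) : ℝ) := Nat.cast_le.2 hB
        _ = (2:ℝ) ^ s * (Nat.choose m s : ℝ) := by push_cast; ring
    have hcn : (0:ℝ) ≤ (Nat.choose m s : ℝ) := by positivity
    have hpw : (0:ℝ) ≤ (1 - L / m) ^ (s * n2) := pow_nonneg hq01 _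
    calc (Nat.choose m s : ℝ) * (Nat.choose m n2 : ℝ) * (1 - L / m) ^ (s * n2)
        ≤ (Real.exp 1 * L) ^ s * ((2:ℝ) ^ s * (Real.exp 1 * L) ^ s) * (1 - L / m) ^ (s * n2) := by
          have h1 : (Nat.choose m s : ℝ) * (Nat.choose m n2 : ℝ)
              ≤ (Real.exp 1 * L) ^ s * ((2:ℝ) ^ s * (Real.exp 1 * L) ^ s) := by
            calc (Nat.choose m s : ℝ) * (Nat.choose m n2 : ℝ)
                ≤ (Nat.choose m s : ℝ) * ((2:ℝ) ^ s * (Nat.choose m s : ℝ)) :=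
                  mul_le_mul_of_nonneg_left hBr hcn
              _ = (2:ℝ) ^ s * ((Nat.choose m s : ℝ) * (Nat.choose m s : ℝ)) := by ring
              _ ≤ (2:ℝ) ^ s * ((Real.exp 1 * L) ^ s * (Real.exp 1 * L) ^ s) := by
                  refine mul_le_mul_of_nonneg_left ?_ (by positivity)
                  exact mul_le_mul hC hC hcn (by positivity)
              _ = (Real.exp 1 * L) ^ s * ((2:ℝ) ^ s * (Real.exp 1 * L) ^ s) := by ring
          exact mul_le_mul_of_nonneg_right h1 hpw
      _ ≤ (Real.exp 1 * L) ^ s * ((2:ℝ) ^ s * (Real.exp 1 * L) ^ s) * Real.exp (-(s:ℝ) * L / 2) := by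
          refine mul_le_mul_of_nonneg_left hD (by positivity)
  refine le_trans hcombo ?_
  have h2s : ((2:ℝ)) ^ s = Real.exp ((s:ℝ) * Real.log 2) := by
    rw [Real.exp_nat_mul, Real.exp_log (by norm_num : (0:ℝ) < 2)]
  have heLs : (Real.exp 1 * L) ^ s = Real.exp ((s:ℝ) * (1 + Real.log L)) := by
    rw [Real.exp_nat_mul, Real.exp_add, Real.exp_log hL0]
  rw [heLs, h2s, ← Real.exp_add, ← Real.exp_add, ← Real.exp_add]
  refine Real.exp_le_exp.2 ?_
  have hsL : (m : ℝ) ≤ (s : ℝ) * L := by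
    calc (m : ℝ) ≤ (k + 1 : ℝ) * L := le_of_lt hmL
      _ ≤ (s : ℝ) * L := by
          have : ((k : ℝ) + 1) ≤ (s : ℝ) := by exact_mod_cast hs1
          nlinarith
  have hcs : (s:ℝ) * (Real.log 2 + 2 + 2 * Real.log L) ≤ (s:ℝ) * (L / 4) := by
    refine mul_le_mul_of_nonneg_left hLc (by positivity)
  linarith [hcs, hsL]


lemma aux_log_small : ∀ᶠ x : ℝ in atTop, Real.log x ≤ x / 16 := by
  have h := Real.isLittleO_log_id_atTop.def (by norm_num : (0:ℝ) < 1/16)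
  filter_upwards [h, eventually_ge_atTop (1:ℝ)] with x hx hx1
  rw [Real.norm_eq_abs, Real.norm_eq_abs, id] at hx
  have h1 := le_abs_self (Real.log x)
  rw [abs_of_nonneg (by linarith : (0:ℝ) ≤ x)] at hx
  linarith

lemma aux3 : ∀ᶠ x : ℝ in atTop, Real.log 2 + 2 + 2 * Real.log x ≤ x / 4 := by
  filter_upwards [aux_log_small, eventually_ge_atTop (40:ℝ)] with x hx h40
  have hl2 : Real.log 2 ≤ 1 := by
    have := Real.log_le_sub_one_of_pos (by norm_num : (0:ℝ) < 2); linarith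
  linarith

lemma aux_log_small' (c : ℝ) (hc : 0 < c) : ∀ᶠ x : ℝ in atTop, Real.log x ≤ c * x := by
  have h := Real.isLittleO_log_id_atTop.def hc
  filter_upwards [h, eventually_ge_atTop (1:ℝ)] with x hx hx1
  rw [Real.norm_eq_abs, Real.norm_eq_abs, id] at hx
  have h1 := le_abs_self (Real.log x)
  rw [abs_of_nonneg (by linarith : (0:ℝ) ≤ x)] at hx
  linarith

lemma aux4 (C : ℝ) (hC : 0 < C) :
    ∀ᶠ x : ℝ in atTop, Real.log 2 + Real.log (x + 1) + C * Real.log x ≤ x / 4 := by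
  have hc : (0:ℝ) < 1 / (8 * (C + 1)) := by positivity
  filter_upwards [aux_log_small' _ hc, eventually_ge_atTop (40:ℝ)] with x hx h40
  have hx1 : (1:ℝ) ≤ x := by linarith
  have hl2 : Real.log 2 ≤ 1 := by
    have := Real.log_le_sub_one_of_pos (by norm_num : (0:ℝ) < 2); linarith
  have hlx1 : Real.log (x + 1) ≤ Real.log 2 + Real.log x := by
    rw [← Real.log_mul (by norm_num) (by linarith)]
    exact Real.log_le_log (by linarith) (by linarith)
  have hlogx0 : 0 ≤ Real.log x := Real.log_nonneg hx1
  have hCx : (C + 1) * Real.log x ≤ x / 8 := by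
    have h2 : (C + 1) * Real.log x ≤ (C + 1) * (1 / (8 * (C + 1)) * x) :=
      mul_le_mul_of_nonneg_left hx (by linarith)
    have h3 : (C + 1) * (1 / (8 * (C + 1)) * x) = x / 8 := by
      field_simp
    linarith
  nlinarith [hCx, hlx1, hl2, hlogx0]


end AuxProb
/-- for any constant `C > 0`, the random bipartite graph `G(m, m, q)` with
`q = (log m)/m` contains, for all large `m` with probability at least `1 - 1/m^C`,
a matching of size at least `m - m/log m`. -/
theorem bip_almost_perfect_matching (C : ℝ) (hC : 0 < C) :
    ∀ᶠ m : ℕ in atTop,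
      1 - 1 / (m : ℝ) ^ C ≤
        bipProb m m (Real.log m / m) (fun E =>
          ∃ (s : Finset (Fin m)) (f : Fin m → Fin m),
            Set.InjOn f ↑s ∧ (∀ x ∈ s, E x (f x)) ∧
            (m : ℝ) - m / Real.log m ≤ (s.card : ℝ)) := by
  filter_upwards [Filter.eventually_ge_atTop 3,
    (Real.tendsto_log_atTop.comp tendsto_natCast_atTop_atTop).eventually_ge_atTop 100,
    (Real.tendsto_log_atTop.comp tendsto_natCast_atTop_atTop).eventually aux3,
    tendsto_natCast_atTop_atTop.eventually (aux4 C hC)] with m hm3 h100 hE3 hE4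
  have hL100 : (100:ℝ) ≤ Real.log m := h100
  have hE3' : Real.log 2 + 2 + 2 * Real.log (Real.log (m:ℝ)) ≤ Real.log (m:ℝ) / 4 := hE3
  have hE4' : Real.log 2 + Real.log ((m:ℝ) + 1) + C * Real.log (m:ℝ) ≤ (m:ℝ) / 4 := hE4
  set L := Real.log (m:ℝ) with hLdef
  have hm0 : (0:ℝ) < (m:ℝ) := by exact_mod_cast (by omega : 0 < m)
  have hL0 : (0:ℝ) < L := by linarith
  have hLm : L ≤ (m:ℝ) := by
    have := Real.log_le_sub_one_of_pos hm0; linarith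
  set q := L / (m:ℝ) with hqdef
  have hq0 : 0 ≤ q := by positivity
  have hq1 : q ≤ 1 := by rw [hqdef, div_le_one hm0]; exact hLm
  set k := ⌊(m:ℝ) / L⌋₊ with hkdef
  have hkle : (k:ℝ) ≤ (m:ℝ) / L := Nat.floor_le (by positivity)
  have hmL : (m:ℝ) < ((k:ℝ) + 1) * L := by
    have h := Nat.lt_floor_add_one ((m:ℝ) / L)
    have h2 := (div_lt_iff₀ hL0).1 h
    push_cast at h2 ⊢
    linarith
  have hk10 : 10 * k ≤ m := by
    have h1 : (m:ℝ) / L ≤ (m:ℝ) / 100 :=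
      div_le_div_of_nonneg_left (le_of_lt hm0) (by norm_num) hL100
    have h10 : ((10 * k : ℕ) : ℝ) ≤ (m:ℝ) := by push_cast; nlinarith [hkle]
    exact_mod_cast h10
  have hkm : k ≤ m := by omega
  set P : (Fin m → Fin m → Prop) → Prop := fun E =>
    ∃ (s : Finset (Fin m)) (f : Fin m → Fin m),
      Set.InjOn f ↑s ∧ (∀ x ∈ s, E x (f x)) ∧
      (m : ℝ) - (m:ℝ) / L ≤ (s.card : ℝ) with hPdef
  have hprop : ∀ E : Fin m → Fin m → Prop,
      (∃ (s : Finset (Fin m)) (f : Fin m → Fin m),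
        Set.InjOn f ↑s ∧ (∀ x ∈ s, E x (f x)) ∧ m - k ≤ s.card) → P E := by
    rintro E ⟨s, f, hinj, hed, hcard⟩
    refine ⟨s, f, hinj, hed, ?_⟩
    have h1 : ((m - k : ℕ) : ℝ) ≤ (s.card : ℝ) := by exact_mod_cast hcard
    rw [Nat.cast_sub hkm] at h1
    have h2 : (m:ℝ) - (m:ℝ)/L ≤ (m:ℝ) - k := by linarith [hkle]
    linarith
  set Q : ℕ × Bool → (Fin m → Fin m → Prop) → Prop := fun sb E =>
    ∃ A B : Finset (Fin m),
      A.card = (if sb.2 then sb.1 else m - sb.1 + k + 1) ∧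
      B.card = (if sb.2 then m - sb.1 + k + 1 else sb.1) ∧
      ∀ x ∈ A, ∀ y ∈ B, ¬ E x y with hQdef
  set S : Finset (ℕ × Bool) :=
    ((Finset.range (m+1)).filter (fun s => k+1 ≤ s ∧ 2*s ≤ m+k+1)) ×ˢ
      (Finset.univ : Finset Bool) with hSdef
  have hstep1 : bipProb m m q (fun E => ¬ P E) ≤ ∑ sb ∈ S, bipProb m m q (Q sb) := by
    refine bipProb_le_sum hq0 hq1 _ S Q ?_
    intro E hnP
    have hnm : ¬ ∃ (s : Finset (Fin m)) (f : Fin m → Fin m),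
        Set.InjOn f ↑s ∧ (∀ x ∈ s, E x (f x)) ∧ m - k ≤ s.card :=
      fun h => hnP (hprop E h)
    obtain ⟨s, hs1, hs2, A, B, hAB, hno⟩ := bad_of_no_matching E (matching_of_hall E) hnm
    have hsm : s ≤ m := by omega
    have hmem : (s, true) ∈ S ∧ (s, false) ∈ S := by
      constructor <;>
        (rw [hSdef]; refine Finset.mem_product.2 ⟨Finset.mem_filter.2
          ⟨Finset.mem_range.2 (by omega), hs1, hs2⟩, Finset.mem_univ _⟩)
    rcases hAB with ⟨hA, hB⟩ | ⟨hA, hB⟩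
    · exact ⟨(s, true), hmem.1, A, B, by simpa using hA, by simpa using hB, hno⟩
    · exact ⟨(s, false), hmem.2, A, B, by simpa using hA, by simpa using hB, hno⟩
  have hstep2 : ∀ sb ∈ S, bipProb m m q (Q sb) ≤ Real.exp (-(m:ℝ)/4) := by
    rintro ⟨s, b⟩ hsb
    rw [hSdef] at hsb
    obtain ⟨hmem, -⟩ := Finset.mem_product.1 hsb
    obtain ⟨-, hs1, hs2⟩ := Finset.mem_filter.1 hmem
    have hterm := term_bound m k s L hE3' hL100 hLm hmL hm3 hk10 hs1 hs2
    set c1 := (if b then s else m - s + k + 1) with hc1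
    set c2 := (if b then m - s + k + 1 else s) with hc2
    have hub : bipProb m m q (Q (s, b)) ≤
        ∑ AB ∈ (Finset.univ.filter (fun AB : Finset (Fin m) × Finset (Fin m) =>
          AB.1.card = c1 ∧ AB.2.card = c2)),
          bipProb m m q (fun E => ∀ x ∈ AB.1, ∀ y ∈ AB.2, ¬ E x y) := by
      refine bipProb_le_sum hq0 hq1 _ _ _ ?_
      rintro E ⟨A, B, hA, hB, hno⟩
      exact ⟨(A, B), Finset.mem_filter.2 ⟨Finset.mem_univ _, hA, hB⟩, hno⟩
    have heq : (∑ AB ∈ (Finset.univ.filter (fun AB : Finset (Fin m) × Finset (Fin m) =>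
          AB.1.card = c1 ∧ AB.2.card = c2)),
          bipProb m m q (fun E => ∀ x ∈ AB.1, ∀ y ∈ AB.2, ¬ E x y)) =
        (Nat.choose m c1 : ℝ) * (Nat.choose m c2 : ℝ) * (1 - q) ^ (c1 * c2) := by
      calc (∑ AB ∈ (Finset.univ.filter (fun AB : Finset (Fin m) × Finset (Fin m) =>
              AB.1.card = c1 ∧ AB.2.card = c2)),
            bipProb m m q (fun E => ∀ x ∈ AB.1, ∀ y ∈ AB.2, ¬ E x y))
          = ∑ AB ∈ (Finset.univ.filter (fun AB : Finset (Fin m) × Finset (Fin m) =>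
              AB.1.card = c1 ∧ AB.2.card = c2)), (1 - q) ^ (c1 * c2) := by
            refine Finset.sum_congr rfl fun AB hAB => ?_
            obtain ⟨-, h1, h2⟩ := Finset.mem_filter.1 hAB
            rw [bipProb_rect, h1, h2]
        _ = ((Finset.univ.filter (fun AB : Finset (Fin m) × Finset (Fin m) =>
              AB.1.card = c1 ∧ AB.2.card = c2)).card : ℝ) * (1 - q) ^ (c1 * c2) := by
            rw [Finset.sum_const, nsmul_eq_mul]
        _ = (Nat.choose m c1 : ℝ) * (Nat.choose m c2 : ℝ) * (1 - q) ^ (c1 * c2) := by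
            rw [card_pairs]; push_cast; ring
    refine le_trans hub (le_trans (le_of_eq heq) ?_)
    rw [hqdef]
    cases b
    · simp only [hc1, hc2, if_neg (Bool.false_ne_true), Bool.false_eq_true] at *
      simp only [if_false] at *
      rw [mul_comm ((Nat.choose m (m - s + k + 1) : ℝ)) ((Nat.choose m s : ℝ)),
        mul_comm (m - s + k + 1) s] at *
      exact hterm
    · simp only [hc1, hc2, if_true] at *
      exact hterm
  have hScard : (S.card : ℝ) ≤ 2 * ((m:ℝ) + 1) := by
    have h1 : S.card ≤ 2 * (m + 1) := by
      rw [hSdef, Finset.card_product]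
      have h2 := Finset.card_filter_le (Finset.range (m+1))
        (fun s => k+1 ≤ s ∧ 2*s ≤ m+k+1)
      rw [Finset.card_range] at h2
      simp only [Finset.card_univ, Fintype.card_bool]
      omega
    exact_mod_cast h1
  have hsum : (∑ sb ∈ S, bipProb m m q (Q sb)) ≤ 2 * ((m:ℝ) + 1) * Real.exp (-(m:ℝ)/4) := by
    calc (∑ sb ∈ S, bipProb m m q (Q sb)) ≤ ∑ _sb ∈ S, Real.exp (-(m:ℝ)/4) :=
          Finset.sum_le_sum hstep2
      _ = (S.card : ℝ) * Real.exp (-(m:ℝ)/4) := by rw [Finset.sum_const, nsmul_eq_mul]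
      _ ≤ 2 * ((m:ℝ) + 1) * Real.exp (-(m:ℝ)/4) :=
          mul_le_mul_of_nonneg_right hScard (le_of_lt (Real.exp_pos _))
  have hpow : (m:ℝ) ^ C = Real.exp (C * L) := by
    rw [Real.rpow_def_of_pos hm0, mul_comm]
  have hfinal : 2 * ((m:ℝ) + 1) * Real.exp (-(m:ℝ)/4) ≤ 1 / (m:ℝ) ^ C := by
    have h2me : 2 * ((m:ℝ) + 1) = Real.exp (Real.log 2 + Real.log ((m:ℝ) + 1)) := by
      rw [Real.exp_add, Real.exp_log (by norm_num : (0:ℝ) < 2),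
        Real.exp_log (by linarith : (0:ℝ) < (m:ℝ) + 1)]
    calc 2 * ((m:ℝ) + 1) * Real.exp (-(m:ℝ)/4)
        = Real.exp (Real.log 2 + Real.log ((m:ℝ) + 1) + (-(m:ℝ)/4)) := by
          rw [Real.exp_add, ← h2me]
      _ ≤ Real.exp (-(C * L)) := Real.exp_le_exp.2 (by linarith)
      _ = 1 / (m:ℝ) ^ C := by rw [hpow, Real.exp_neg, one_div]
  have hneg : bipProb m m q (fun E => ¬ P E) ≤ 1 / (m:ℝ) ^ C :=
    le_trans hstep1 (le_trans hsum hfinal)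
  have hcompl := bipProb_compl q P
  linarith
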